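/- Suppose 0 < c₁ < 6^{−1/2} and X ≥ 1. Then for any three points x, y, z ∈ A³ each satisfying the inequalities |·₀| ≤ X and L(·) ≤ c₁·X^{−1/γ}, the 3×3 determinant det(x, y, z) is zero. Consequently, the set of solutions of these inequalities in A³ is contained in a K-vector subspace of K³ of dimension at most 2. -/

import Mathlib

open Filter

section Aux

variable {L : Type*} [Field L]

lemma abv_six (abv : AbsoluteValue L ℝ) (v1 v2 v3 v4 v5 v6 : L) :
    abv (v1 - v2 - v3 + v4 + v5 - v6) ≤
      abv v1 + abv v2 + abv v3 + abv v4 + abv v5 + abv v6 := by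
  calc abv (v1 - v2 - v3 + v4 + v5 - v6)
      ≤ abv (v1 - v2 - v3 + v4 + v5) + abv v6 := by
        simpa [sub_eq_add_neg, abv.map_neg] using abv.add_le (v1 - v2 - v3 + v4 + v5) (-v6)
    _ ≤ abv (v1 - v2 - v3 + v4) + abv v5 + abv v6 := by
        have := abv.add_le (v1 - v2 - v3 + v4) v5; linarith
    _ ≤ abv (v1 - v2 - v3) + abv v4 + abv v5 + abv v6 := by
        have := abv.add_le (v1 - v2 - v3) v4; linarith
    _ ≤ abv (v1 - v2) + abv v3 + abv v4 + abv v5 + abv v6 := by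
        have := abv.add_le (v1 - v2) (-v3)
        simp only [abv.map_neg, ← sub_eq_add_neg] at this; linarith
    _ ≤ abv v1 + abv v2 + abv v3 + abv v4 + abv v5 + abv v6 := by
        have := abv.add_le v1 (-v2)
        simp only [abv.map_neg, ← sub_eq_add_neg] at this; linarith

lemma abv_mul3_le (abv : AbsoluteValue L ℝ) (u v w : L) {bu bv bw : ℝ}
    (hu : abv u ≤ bu) (hv : abv v ≤ bv) (hw : abv w ≤ bw) :
    abv (u * v * w) ≤ bu * bv * bw := by
  rw [map_mul, map_mul]
  have h1 := abv.nonneg u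
  have h2 := abv.nonneg v
  have h3 := abv.nonneg w
  exact mul_le_mul (mul_le_mul hu hv h2 (h1.trans hu)) hw h3
    (mul_nonneg (h1.trans hu) (h2.trans hv))

lemma det_zero_aux
    {A : Type*} [CommRing A] [IsDomain A]
    {K : Type*} [Field K] [Algebra A K] [IsFractionRing A K]
    (f : K →+* L)
    (abv : AbsoluteValue L ℝ)
    (habv_A : ∀ a : A, a ≠ 0 → 1 ≤ abv (f (algebraMap A K a)))
    (ξ : L) (c₁ X : ℝ) (hc₁ : 0 < c₁) (hc₁' : c₁ < (6 : ℝ) ^ (-1 / 2 : ℝ))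
    (hX : 1 ≤ X) (x y z : Fin 3 → A)
    (hx : abv (f (algebraMap A K (x 0))) ≤ X ∧
        max (abv (f (algebraMap A K (x 0)) * ξ - f (algebraMap A K (x 1))))
            (abv (f (algebraMap A K (x 0)) * ξ ^ 2 - f (algebraMap A K (x 2))))
          ≤ c₁ * X ^ (-1 / Real.goldenRatio))
    (hy : abv (f (algebraMap A K (y 0))) ≤ X ∧
        max (abv (f (algebraMap A K (y 0)) * ξ - f (algebraMap A K (y 1))))
            (abv (f (algebraMap A K (y 0)) * ξ ^ 2 - f (algebraMap A K (y 2))))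
          ≤ c₁ * X ^ (-1 / Real.goldenRatio))
    (hz : abv (f (algebraMap A K (z 0))) ≤ X ∧
        max (abv (f (algebraMap A K (z 0)) * ξ - f (algebraMap A K (z 1))))
            (abv (f (algebraMap A K (z 0)) * ξ ^ 2 - f (algebraMap A K (z 2))))
          ≤ c₁ * X ^ (-1 / Real.goldenRatio)) :
    Matrix.det (Matrix.of ![x, y, z]) = 0 := by
  by_contra hd
  set g : A →+* L := f.comp (algebraMap A K) with hg
  have hd1 : 1 ≤ abv (g (Matrix.det (Matrix.of ![x, y, z]))) := habv_A _ hd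
  set ε : ℝ := c₁ * X ^ (-1 / Real.goldenRatio) with hε
  have hX0 : (0:ℝ) < X := by linarith
  have hε0 : 0 ≤ ε := mul_nonneg hc₁.le (Real.rpow_nonneg hX0.le _)
  set a0 := f (algebraMap A K (x 0)) with ha0d
  set a1 := f (algebraMap A K (x 1)) with ha1d
  set a2 := f (algebraMap A K (x 2)) with ha2d
  set b0 := f (algebraMap A K (y 0)) with hb0d
  set b1 := f (algebraMap A K (y 1)) with hb1d
  set b2 := f (algebraMap A K (y 2)) with hb2d
  set c0 := f (algebraMap A K (z 0)) with hc0d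
  set c1 := f (algebraMap A K (z 1)) with hc1d
  set c2 := f (algebraMap A K (z 2)) with hc2d
  have key : g (Matrix.det (Matrix.of ![x, y, z])) =
      a0 * (b0*ξ - b1) * (c0*ξ^2 - c2) - a0 * (b0*ξ^2 - b2) * (c0*ξ - c1)
      - (a0*ξ - a1) * b0 * (c0*ξ^2 - c2) + (a0*ξ - a1) * (b0*ξ^2 - b2) * c0
      + (a0*ξ^2 - a2) * b0 * (c0*ξ - c1) - (a0*ξ^2 - a2) * (b0*ξ - b1) * c0 := by
    have hdet : (Matrix.of ![x, y, z]).det =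
        x 0 * y 1 * z 2 - x 0 * y 2 * z 1 - x 1 * y 0 * z 2
        + x 1 * y 2 * z 0 + x 2 * y 0 * z 1 - x 2 * y 1 * z 0 := by
      rw [Matrix.det_fin_three]
      norm_num [Matrix.of_apply]
      rfl
    rw [hg, RingHom.comp_apply, hdet]
    simp only [map_mul, map_sub, map_add]
    rw [← ha0d, ← ha1d, ← ha2d, ← hb0d, ← hb1d, ← hb2d, ← hc0d, ← hc1d, ← hc2d]
    ring
  have hA1 : abv (a0*ξ - a1) ≤ ε := le_trans (le_max_left _ _) hx.2
  have hA2 : abv (a0*ξ^2 - a2) ≤ ε := le_trans (le_max_right _ _) hx.2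
  have hB1 : abv (b0*ξ - b1) ≤ ε := le_trans (le_max_left _ _) hy.2
  have hB2 : abv (b0*ξ^2 - b2) ≤ ε := le_trans (le_max_right _ _) hy.2
  have hC1 : abv (c0*ξ - c1) ≤ ε := le_trans (le_max_left _ _) hz.2
  have hC2 : abv (c0*ξ^2 - c2) ≤ ε := le_trans (le_max_right _ _) hz.2
  have hb0X : abv b0 ≤ X := hy.1
  have ht1 : abv (a0 * (b0*ξ - b1) * (c0*ξ^2 - c2)) ≤ X * ε^2 := by
    have := abv_mul3_le abv _ _ _ hx.1 hB1 hC2; calc _ ≤ X * ε * ε := this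
    _ = X * ε^2 := by ring
  have ht2 : abv (a0 * (b0*ξ^2 - b2) * (c0*ξ - c1)) ≤ X * ε^2 := by
    have := abv_mul3_le abv _ _ _ hx.1 hB2 hC1; calc _ ≤ X * ε * ε := this
    _ = X * ε^2 := by ring
  have ht3 : abv ((a0*ξ - a1) * b0 * (c0*ξ^2 - c2)) ≤ X * ε^2 := by
    have := abv_mul3_le abv _ _ _ hA1 hy.1 hC2; calc _ ≤ ε * X * ε := this
    _ = X * ε^2 := by ring
  have ht4 : abv ((a0*ξ - a1) * (b0*ξ^2 - b2) * c0) ≤ X * ε^2 := by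
    have := abv_mul3_le abv _ _ _ hA1 hB2 hz.1; calc _ ≤ ε * ε * X := this
    _ = X * ε^2 := by ring
  have ht5 : abv ((a0*ξ^2 - a2) * b0 * (c0*ξ - c1)) ≤ X * ε^2 := by
    have := abv_mul3_le abv _ _ _ hA2 hy.1 hC1; calc _ ≤ ε * X * ε := this
    _ = X * ε^2 := by ring
  have ht6 : abv ((a0*ξ^2 - a2) * (b0*ξ - b1) * c0) ≤ X * ε^2 := by
    have := abv_mul3_le abv _ _ _ hA2 hB1 hz.1; calc _ ≤ ε * ε * X := this
    _ = X * ε^2 := by ring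
  have hbound : abv (g (Matrix.det (Matrix.of ![x, y, z]))) ≤ 6 * (X * ε^2) := by
    rw [key]
    have := abv_six abv (a0 * (b0*ξ - b1) * (c0*ξ^2 - c2)) (a0 * (b0*ξ^2 - b2) * (c0*ξ - c1))
      ((a0*ξ - a1) * b0 * (c0*ξ^2 - c2)) ((a0*ξ - a1) * (b0*ξ^2 - b2) * c0)
      ((a0*ξ^2 - a2) * b0 * (c0*ξ - c1)) ((a0*ξ^2 - a2) * (b0*ξ - b1) * c0)
    linarith
  -- arithmetic: 6 * (X * ε^2) < 1
  have hg1 : 1 < Real.goldenRatio := Real.one_lt_goldenRatio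
  have hg2 : Real.goldenRatio < 2 := Real.goldenRatio_lt_two
  have hsq : (X ^ (-1 / Real.goldenRatio : ℝ))^2 = X ^ (-2 / Real.goldenRatio : ℝ) := by
    rw [← Real.rpow_natCast (X ^ (-1 / Real.goldenRatio : ℝ)) 2, ← Real.rpow_mul hX0.le]
    congr 1; push_cast; ring
  have hXfac : X * (X ^ (-1 / Real.goldenRatio : ℝ))^2 ≤ 1 := by
    rw [hsq]
    have : X * X ^ (-2 / Real.goldenRatio : ℝ) = X ^ (1 + -2 / Real.goldenRatio : ℝ) := by
      rw [Real.rpow_add hX0, Real.rpow_one]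
    rw [this]
    apply Real.rpow_le_one_of_one_le_of_nonpos hX
    have h2g : (1:ℝ) ≤ 2 / Real.goldenRatio := by
      rw [le_div_iff₀ (by linarith)]; linarith
    have : -2 / Real.goldenRatio = -(2 / Real.goldenRatio) := by ring
    rw [this]; linarith
  have hc6 : 6 * c₁^2 < 1 := by
    have hsq6 : ((6:ℝ) ^ (-1/2 : ℝ))^2 = 6⁻¹ := by
      rw [← Real.rpow_natCast ((6:ℝ) ^ (-1/2 : ℝ)) 2, ← Real.rpow_mul (by norm_num)]
      norm_num
    have hlt : c₁^2 < ((6:ℝ) ^ (-1/2 : ℝ))^2 := by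
      apply pow_lt_pow_left₀ hc₁' hc₁.le (by norm_num)
    rw [hsq6] at hlt
    linarith
  have heq : 6 * (X * ε^2) = (6 * c₁^2) * (X * (X ^ (-1 / Real.goldenRatio : ℝ))^2) := by
    rw [hε]; ring
  have hfin : 6 * (X * ε^2) < 1 := by
    rw [heq]
    have h1 : (6 * c₁^2) * (X * (X ^ (-1 / Real.goldenRatio : ℝ))^2) ≤ (6 * c₁^2) * 1 :=
      mul_le_mul_of_nonneg_left hXfac (by positivity)
    linarith
  linarith

end Aux

/-- **Vanishing determinants of solutions** (after Davenport–Schmidt, Lemmas 4 and 5).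
`A` is an integral domain with fraction field `K`, `L = K̄` is the completion of `K`
for a nontrivial absolute value `abv` with `abv a ≥ 1` for nonzero `a ∈ A`, and
`ξ ∈ K̄`.  If `0 < c₁ < 6^(-1/2)` and `X ≥ 1`, then the determinant of any three
solutions `x, y, z ∈ A³` of `|x₀| ≤ X` and `max (|x₀ξ - x₁|, |x₀ξ² - x₂|) ≤ c₁ X^(-1/γ)`
vanishes; consequently all solutions lie in a `K`-subspace of `K³` of dimension ≤ 2. -/
theorem det_eq_zero_of_solutions
    {A : Type*} [CommRing A] [IsDomain A]
    {K : Type*} [Field K] [Algebra A K] [IsFractionRing A K]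
    {L : Type*} [Field L] [MetricSpace L] [CompleteSpace L]
    (f : K →+* L) (hdense : DenseRange f)
    (abv : AbsoluteValue L ℝ)
    (hdist : ∀ x y : L, dist x y = abv (x - y))
    (habv_nontrivial : ∃ x : K, abv (f x) ≠ 0 ∧ abv (f x) ≠ 1)
    (habv_A : ∀ a : A, a ≠ 0 → 1 ≤ abv (f (algebraMap A K a)))
    (ξ : L) (c₁ X : ℝ) (hc₁ : 0 < c₁) (hc₁' : c₁ < (6 : ℝ) ^ (-1 / 2 : ℝ))
    (hX : 1 ≤ X) :
    (∀ x y z : Fin 3 → A,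
      (abv (f (algebraMap A K (x 0))) ≤ X ∧
        max (abv (f (algebraMap A K (x 0)) * ξ - f (algebraMap A K (x 1))))
            (abv (f (algebraMap A K (x 0)) * ξ ^ 2 - f (algebraMap A K (x 2))))
          ≤ c₁ * X ^ (-1 / Real.goldenRatio)) →
      (abv (f (algebraMap A K (y 0))) ≤ X ∧
        max (abv (f (algebraMap A K (y 0)) * ξ - f (algebraMap A K (y 1))))
            (abv (f (algebraMap A K (y 0)) * ξ ^ 2 - f (algebraMap A K (y 2))))
          ≤ c₁ * X ^ (-1 / Real.goldenRatio)) →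
      (abv (f (algebraMap A K (z 0))) ≤ X ∧
        max (abv (f (algebraMap A K (z 0)) * ξ - f (algebraMap A K (z 1))))
            (abv (f (algebraMap A K (z 0)) * ξ ^ 2 - f (algebraMap A K (z 2))))
          ≤ c₁ * X ^ (-1 / Real.goldenRatio)) →
      Matrix.det (Matrix.of ![x, y, z]) = 0) ∧
    ∃ V : Submodule K (Fin 3 → K), Module.finrank K V ≤ 2 ∧
      ∀ x : Fin 3 → A,
        (abv (f (algebraMap A K (x 0))) ≤ X ∧
          max (abv (f (algebraMap A K (x 0)) * ξ - f (algebraMap A K (x 1))))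
              (abv (f (algebraMap A K (x 0)) * ξ ^ 2 - f (algebraMap A K (x 2))))
            ≤ c₁ * X ^ (-1 / Real.goldenRatio)) →
        (fun j => algebraMap A K (x j)) ∈ V := by
  have part1 : ∀ x y z : Fin 3 → A,
      (abv (f (algebraMap A K (x 0))) ≤ X ∧
        max (abv (f (algebraMap A K (x 0)) * ξ - f (algebraMap A K (x 1))))
            (abv (f (algebraMap A K (x 0)) * ξ ^ 2 - f (algebraMap A K (x 2))))
          ≤ c₁ * X ^ (-1 / Real.goldenRatio)) →
      (abv (f (algebraMap A K (y 0))) ≤ X ∧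
        max (abv (f (algebraMap A K (y 0)) * ξ - f (algebraMap A K (y 1))))
            (abv (f (algebraMap A K (y 0)) * ξ ^ 2 - f (algebraMap A K (y 2))))
          ≤ c₁ * X ^ (-1 / Real.goldenRatio)) →
      (abv (f (algebraMap A K (z 0))) ≤ X ∧
        max (abv (f (algebraMap A K (z 0)) * ξ - f (algebraMap A K (z 1))))
            (abv (f (algebraMap A K (z 0)) * ξ ^ 2 - f (algebraMap A K (z 2))))
          ≤ c₁ * X ^ (-1 / Real.goldenRatio)) →
      Matrix.det (Matrix.of ![x, y, z]) = 0 := fun x y z hx hy hz =>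
    det_zero_aux f abv habv_A ξ c₁ X hc₁ hc₁' hX x y z hx hy hz
  refine ⟨part1, ?_⟩
  set S : Set (Fin 3 → K) :=
    {v | ∃ x : Fin 3 → A,
      (abv (f (algebraMap A K (x 0))) ≤ X ∧
        max (abv (f (algebraMap A K (x 0)) * ξ - f (algebraMap A K (x 1))))
            (abv (f (algebraMap A K (x 0)) * ξ ^ 2 - f (algebraMap A K (x 2))))
          ≤ c₁ * X ^ (-1 / Real.goldenRatio)) ∧ v = fun j => algebraMap A K (x j)} with hS
  refine ⟨Submodule.span K S, ?_, fun x hx => Submodule.subset_span ⟨x, hx, rfl⟩⟩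
  by_contra hrank
  push_neg at hrank
  obtain ⟨t, hts, hspan, hli⟩ := exists_linearIndependent K S
  have htfin : t.Finite := hli.setFinite
  haveI := htfin.fintype
  have hcard : Module.finrank K (Submodule.span K t) = t.toFinset.card :=
    finrank_span_set_eq_card hli
  rw [hspan] at hcard
  have h3 : 3 ≤ Fintype.card t := by
    rw [Set.toFinset_card] at hcard
    omega
  obtain ⟨e⟩ := Function.Embedding.nonempty_of_card_le (by simpa using h3 : Fintype.card (Fin 3) ≤ Fintype.card t)
  set v : Fin 3 → (Fin 3 → K) := fun i => ((e i : t) : Fin 3 → K) with hv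
  have hvli : LinearIndependent K v := hli.comp e e.injective
  have hmem : ∀ i, v i ∈ S := fun i => hts (e i).2
  choose w hw hweq using hmem
  have hdet0 : (Matrix.of ![w 0, w 1, w 2]).det = 0 :=
    part1 (w 0) (w 1) (w 2) (hw 0) (hw 1) (hw 2)
  have hmap : Matrix.of ![v 0, v 1, v 2] =
      (Matrix.of ![w 0, w 1, w 2]).map (algebraMap A K) := by
    ext i j
    fin_cases i <;> simp [Matrix.map_apply, hweq 0, hweq 1, hweq 2]
  have hdetK : (Matrix.of ![v 0, v 1, v 2]).det = 0 := by
    rw [hmap, ← RingHom.mapMatrix_apply, ← RingHom.map_det, hdet0, map_zero]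
  have hrows : LinearIndependent K (fun i => (Matrix.of ![v 0, v 1, v 2]) i) := by
    have : (fun i => (Matrix.of ![v 0, v 1, v 2]) i) = v := by
      funext i; fin_cases i <;> rfl
    rw [this]; exact hvli
  have hunit : IsUnit (Matrix.of ![v 0, v 1, v 2]) :=
    Matrix.linearIndependent_rows_iff_isUnit.mp hrows
  have := (Matrix.isUnit_iff_isUnit_det _).mp hunit
  rw [hdetK] at this
  exact (isUnit_iff_ne_zero.mp this) rfl
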